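/- For any non-zero matrix Z ∈ ℝ^{m×n} and t ∈ ℝ, the max-norm satisfies ‖Z‖_max ≤ t if and only if there exist symmetric matrices V ∈ S^{m×m}, W ∈ S^{n×n} such that [[V, Z], [Zᵀ, W]] ⪰ 0, V_ii ≤ t for all i ∈ [m], and W_jj ≤ t for all j ∈ [n]. -/

import Mathlib

/-- The max-norm of `Z`: the minimum over all factorizations `Z = L Rᵀ` (with any
number `k` of columns) of `max(‖L‖₂,∞², ‖R‖₂,∞²)`, where `‖L‖₂,∞` is the largest
Euclidean norm of a row of `L`. -/
noncomputable def maxNorm {m n : ℕ} (Z : Matrix (Fin m) (Fin n) ℝ) : ℝ :=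
  sInf {r : ℝ | ∃ k : ℕ, ∃ L : Matrix (Fin m) (Fin k) ℝ, ∃ R : Matrix (Fin n) (Fin k) ℝ,
    L * R.transpose = Z ∧
    r = max (⨆ i, ∑ j, (L i j) ^ 2) (⨆ i, ∑ j, (R i j) ^ 2)}

open Matrix Filter Topology

private lemma entry_abs_le {ι : Type*} [Fintype ι] [DecidableEq ι] {M : Matrix ι ι ℝ}
    (h : M.PosSemidef) (a b : ι) : |M a b| ≤ (M a a + M b b) / 2 := by
  have hsym : M b a = M a b := by
    have h2 := congrFun (congrFun h.1 a) b
    simpa [Matrix.conjTranspose_apply] using h2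
  have h1 := h.dotProduct_mulVec_nonneg (Pi.single a 1 + Pi.single b 1)
  have h2 := h.dotProduct_mulVec_nonneg (Pi.single a 1 - Pi.single b 1)
  simp only [star_trivial, Matrix.mulVec_add, Matrix.mulVec_sub, Matrix.mulVec_single_one,
    add_dotProduct, sub_dotProduct, single_dotProduct, dotProduct_add,
    dotProduct_sub, one_mul, single_one_dotProduct, Pi.add_apply, Pi.sub_apply,
    Matrix.transpose_apply, Matrix.col_apply] at h1 h2
  rw [abs_le]
  constructor <;> nlinarith [h1, h2]


private lemma maxNorm_le_of_feas {m n : ℕ} (hm : 0 < m) (hn : 0 < n)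
    (Z : Matrix (Fin m) (Fin n) ℝ) {t : ℝ}
    (V : Matrix (Fin m) (Fin m) ℝ) (W : Matrix (Fin n) (Fin n) ℝ)
    (hpsd : (Matrix.fromBlocks V Z Z.transpose W).PosSemidef)
    (hV : ∀ i, V i i ≤ t) (hW : ∀ j, W j j ≤ t) :
    maxNorm Z ≤ t := by
  haveI : Nonempty (Fin m) := ⟨⟨0, hm⟩⟩
  haveI : Nonempty (Fin n) := ⟨⟨0, hn⟩⟩
  obtain ⟨B, hB⟩ : ∃ B : Matrix (Fin m ⊕ Fin n) (Fin m ⊕ Fin n) ℝ,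
      Matrix.fromBlocks V Z Z.transpose W = Bᴴ * B := by
    open scoped MatrixOrder in exact CStarAlgebra.nonneg_iff_eq_star_mul_self.mp hpsd.nonneg
  set e := (finSumFinEquiv (m := m) (n := n)).symm
  set L : Matrix (Fin m) (Fin (m + n)) ℝ := fun i j => B (e j) (Sum.inl i) with hL
  set R : Matrix (Fin n) (Fin (m + n)) ℝ := fun i j => B (e j) (Sum.inr i) with hR
  have key : ∀ a b, (Matrix.fromBlocks V Z Z.transpose W) a b = ∑ c, B c a * B c b := by
    intro a b
    rw [hB, Matrix.mul_apply]
    simp [Matrix.conjTranspose_apply]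
  have hsum : ∀ (a b : Fin m ⊕ Fin n),
      ∑ j : Fin (m + n), B (e j) a * B (e j) b = ∑ c, B c a * B c b := by
    intro a b
    exact Equiv.sum_comp e (fun c => B c a * B c b)
  have hLR : L * R.transpose = Z := by
    ext i j
    rw [Matrix.mul_apply]
    simp only [Matrix.transpose_apply]
    simp only [hL, hR]
    rw [hsum, ← key]
    simp
  have hrowL : ∀ i, ∑ j, (L i j) ^ 2 = V i i := by
    intro i
    have := key (Sum.inl i) (Sum.inl i)
    simp only [Matrix.fromBlocks_apply₁₁] at this
    rw [this, ← hsum]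
    simp [hL, sq]
  have hrowR : ∀ i, ∑ j, (R i j) ^ 2 = W i i := by
    intro i
    have := key (Sum.inr i) (Sum.inr i)
    simp only [Matrix.fromBlocks_apply₂₂] at this
    rw [this, ← hsum]
    simp [hR, sq]
  have hmem : (max (⨆ i, ∑ j, (L i j) ^ 2) (⨆ i, ∑ j, (R i j) ^ 2)) ∈
      {r : ℝ | ∃ k : ℕ, ∃ L : Matrix (Fin m) (Fin k) ℝ, ∃ R : Matrix (Fin n) (Fin k) ℝ,
        L * R.transpose = Z ∧
        r = max (⨆ i, ∑ j, (L i j) ^ 2) (⨆ i, ∑ j, (R i j) ^ 2)} :=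
    ⟨m + n, L, R, hLR, rfl⟩
  have hbdd : BddBelow {r : ℝ | ∃ k : ℕ, ∃ L : Matrix (Fin m) (Fin k) ℝ, ∃ R : Matrix (Fin n) (Fin k) ℝ,
      L * R.transpose = Z ∧
      r = max (⨆ i, ∑ j, (L i j) ^ 2) (⨆ i, ∑ j, (R i j) ^ 2)} := by
    refine ⟨0, fun r hr => ?_⟩
    obtain ⟨k, L', R', -, rfl⟩ := hr
    refine le_trans ?_ (le_max_left _ _)
    refine le_trans ?_ (le_ciSup (Set.Finite.bddAbove (Set.finite_range _)) (Classical.arbitrary (Fin m)))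
    positivity
  refine le_trans (csInf_le hbdd hmem) ?_
  refine max_le (ciSup_le fun i => ?_) (ciSup_le fun i => ?_)
  · rw [hrowL]; exact hV i
  · rw [hrowR]; exact hW i

private lemma feas_of_mem {m n : ℕ} (Z : Matrix (Fin m) (Fin n) ℝ) {r : ℝ}
    (hr : r ∈ {r : ℝ | ∃ k : ℕ, ∃ L : Matrix (Fin m) (Fin k) ℝ, ∃ R : Matrix (Fin n) (Fin k) ℝ,
      L * R.transpose = Z ∧
      r = max (⨆ i, ∑ j, (L i j) ^ 2) (⨆ i, ∑ j, (R i j) ^ 2)}) :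
    ∃ V : Matrix (Fin m) (Fin m) ℝ, ∃ W : Matrix (Fin n) (Fin n) ℝ,
      V.IsSymm ∧ W.IsSymm ∧
      (Matrix.fromBlocks V Z Z.transpose W).PosSemidef ∧
      (∀ i, V i i ≤ r) ∧ (∀ j, W j j ≤ r) := by
  obtain ⟨k, L, R, hLR, rfl⟩ := hr
  refine ⟨L * L.transpose, R * R.transpose, ?_, ?_, ?_, ?_, ?_⟩
  · unfold Matrix.IsSymm; rw [Matrix.transpose_mul, Matrix.transpose_transpose]
  · unfold Matrix.IsSymm; rw [Matrix.transpose_mul, Matrix.transpose_transpose]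
  · have h := Matrix.posSemidef_self_mul_conjTranspose (Matrix.fromRows L R)
    have heq : Matrix.fromRows L R * (Matrix.fromRows L R)ᴴ =
        Matrix.fromBlocks (L * L.transpose) Z Z.transpose (R * R.transpose) := by
      have hZT : R * L.transpose = Z.transpose := by
        rw [← hLR, Matrix.transpose_mul, Matrix.transpose_transpose]
      rw [Matrix.conjTranspose_eq_transpose_of_trivial, Matrix.transpose_fromRows,
        Matrix.fromRows_mul_fromCols, hLR, hZT]
    rwa [heq] at h
  · intro i
    have : (L * L.transpose) i i = ∑ j, (L i j) ^ 2 := by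
      rw [Matrix.mul_apply]; simp [sq]
    rw [this]
    refine le_trans (le_ciSup (f := fun i => ∑ j, (L i j) ^ 2) (Set.Finite.bddAbove (Set.finite_range _)) i) (le_max_left _ _)
  · intro j
    have : (R * R.transpose) j j = ∑ i, (R j i) ^ 2 := by
      rw [Matrix.mul_apply]; simp [sq]
    rw [this]
    refine le_trans (le_ciSup (f := fun i => ∑ j, (R i j) ^ 2) (Set.Finite.bddAbove (Set.finite_range _)) j) (le_max_right _ _)

private lemma feas_closed {m n : ℕ} (Z : Matrix (Fin m) (Fin n) ℝ) (t : ℝ)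
    (h : ∀ ε : ℝ, 0 < ε → ∃ V : Matrix (Fin m) (Fin m) ℝ, ∃ W : Matrix (Fin n) (Fin n) ℝ,
      V.IsSymm ∧ W.IsSymm ∧ (Matrix.fromBlocks V Z Z.transpose W).PosSemidef ∧
      (∀ i, V i i ≤ t + ε) ∧ (∀ j, W j j ≤ t + ε)) :
    ∃ V : Matrix (Fin m) (Fin m) ℝ, ∃ W : Matrix (Fin n) (Fin n) ℝ,
      V.IsSymm ∧ W.IsSymm ∧ (Matrix.fromBlocks V Z Z.transpose W).PosSemidef ∧
      (∀ i, V i i ≤ t) ∧ (∀ j, W j j ≤ t) := by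
  have hpos : ∀ k : ℕ, (0:ℝ) < 1 / (k + 1) := fun k => by positivity
  choose V W hVs hWs hpsd hVd hWd using fun k : ℕ => h (1 / (k + 1)) (hpos k)
  set M : ℕ → Matrix (Fin m ⊕ Fin n) (Fin m ⊕ Fin n) ℝ :=
    fun k => Matrix.fromBlocks (V k) Z Z.transpose (W k) with hM
  have hdiag : ∀ k (a : Fin m ⊕ Fin n), M k a a ≤ t + 1 / (k + 1) := by
    rintro k (i | j)
    · simpa [hM] using hVd k i
    · simpa [hM] using hWd k j
  have hone : ∀ k : ℕ, (1:ℝ) / (k + 1) ≤ 1 := by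
    intro k
    rw [div_le_one (by positivity)]
    have : (0:ℝ) ≤ (k:ℝ) := Nat.cast_nonneg k
    linarith
  have hbound : ∀ k a b, M k a b ∈ Set.Icc (-(|t| + 1)) (|t| + 1) := by
    intro k a b
    have h1 : |M k a b| ≤ (M k a a + M k b b) / 2 := entry_abs_le (hpsd k) a b
    have h2 := hdiag k a
    have h3 := hdiag k b
    have h4 := hone k
    have h5 := le_abs_self t
    have h6 : (M k a a + M k b b) / 2 ≤ |t| + 1 := by linarith
    have h7 := abs_le.mp (h1.trans h6)
    exact ⟨h7.1, h7.2⟩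
  have hcomp : IsCompact (Set.univ.pi (fun _ : Fin m ⊕ Fin n =>
      Set.univ.pi fun _ : Fin m ⊕ Fin n => Set.Icc (-(|t| + 1)) (|t| + 1))) :=
    isCompact_univ_pi fun _ => isCompact_univ_pi fun _ => isCompact_Icc
  obtain ⟨g, -, φ, hφ, hg⟩ := hcomp.tendsto_subseq
    (x := fun k => (fun a b => M k a b)) (fun k => by
      rw [Set.mem_univ_pi]
      intro a
      rw [Set.mem_univ_pi]
      intro b
      exact hbound k a b)
  have hent : ∀ a b, Tendsto (fun k => M (φ k) a b) atTop (𝓝 (g a b)) := by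
    intro a b
    exact tendsto_pi_nhds.mp (tendsto_pi_nhds.mp hg a) b
  have gsymm : ∀ a b, g a b = g b a := by
    intro a b
    refine tendsto_nhds_unique (hent a b) ?_
    have : (fun k => M (φ k) a b) = fun k => M (φ k) b a := by
      funext k
      have h2 := congrFun (congrFun (hpsd (φ k)).1 b) a
      simpa [hM, Matrix.conjTranspose_apply] using h2
    rw [this]
    exact hent b a
  have gZ : ∀ i j, g (Sum.inl i) (Sum.inr j) = Z i j := by
    intro i j
    refine tendsto_nhds_unique (hent _ _) ?_
    have : (fun k => M (φ k) (Sum.inl i) (Sum.inr j)) = fun _ => Z i j := by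
      funext k; simp [hM]
    rw [this]
    exact tendsto_const_nhds
  set Vf : Matrix (Fin m) (Fin m) ℝ := fun i i' => g (Sum.inl i) (Sum.inl i') with hVf
  set Wf : Matrix (Fin n) (Fin n) ℝ := fun j j' => g (Sum.inr j) (Sum.inr j') with hWf
  have hMfg : ∀ a b, (Matrix.fromBlocks Vf Z Z.transpose Wf) a b = g a b := by
    rintro (i | i) (j | j)
    · rfl
    · simpa using (gZ i j).symm
    · rw [Matrix.fromBlocks_apply₂₁, Matrix.transpose_apply, ← gZ j i, gsymm]
    · rfl
  refine ⟨Vf, Wf, ?_, ?_, ?_, ?_, ?_⟩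
  · ext i j
    exact gsymm (Sum.inl j) (Sum.inl i)
  · ext i j
    exact gsymm (Sum.inr j) (Sum.inr i)
  · refine Matrix.PosSemidef.of_dotProduct_mulVec_nonneg ?_ ?_
    · ext a b
      rw [Matrix.conjTranspose_apply, star_trivial, hMfg, hMfg]
      exact gsymm b a
    · intro x
      have hq : ∀ (N : Matrix (Fin m ⊕ Fin n) (Fin m ⊕ Fin n) ℝ),
          dotProduct (star x) (N *ᵥ x) = ∑ a, x a * ∑ b, N a b * x b := by
        intro N
        simp [dotProduct, Matrix.mulVec]
      rw [hq]
      have hlim : Tendsto (fun k => ∑ a, x a * ∑ b, M (φ k) a b * x b) atTop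
          (𝓝 (∑ a, x a * ∑ b, (Matrix.fromBlocks Vf Z Z.transpose Wf) a b * x b)) := by
        refine tendsto_finset_sum _ fun a _ => Tendsto.const_mul _ ?_
        refine tendsto_finset_sum _ fun b _ => Tendsto.mul_const _ ?_
        rw [hMfg]
        exact hent a b
      refine ge_of_tendsto' hlim fun k => ?_
      have := (hpsd (φ k)).dotProduct_mulVec_nonneg x
      rwa [hq] at this
  · intro i
    have hVlim := hent (Sum.inl i) (Sum.inl i)
    have htend : Tendsto (fun k : ℕ => t + 1 / ((φ k : ℝ) + 1)) atTop (𝓝 (t + 0)) := by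
      refine tendsto_const_nhds.add ?_
      exact tendsto_one_div_add_atTop_nhds_zero_nat.comp hφ.tendsto_atTop
    rw [add_zero] at htend
    have : Vf i i = g (Sum.inl i) (Sum.inl i) := rfl
    rw [this]
    refine le_of_tendsto_of_tendsto' hVlim htend fun k => ?_
    exact hdiag (φ k) (Sum.inl i)
  · intro j
    have hWlim := hent (Sum.inr j) (Sum.inr j)
    have htend : Tendsto (fun k : ℕ => t + 1 / ((φ k : ℝ) + 1)) atTop (𝓝 (t + 0)) := by
      refine tendsto_const_nhds.add ?_
      exact tendsto_one_div_add_atTop_nhds_zero_nat.comp hφ.tendsto_atTop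
    rw [add_zero] at htend
    have : Wf j j = g (Sum.inr j) (Sum.inr j) := rfl
    rw [this]
    refine le_of_tendsto_of_tendsto' hWlim htend fun k => ?_
    exact hdiag (φ k) (Sum.inr j)

/-- Semidefinite characterization of the max-norm: for a nonzero `Z ∈ ℝ^{m×n}`,
`‖Z‖_max ≤ t` iff there are symmetric `V, W` with `[[V, Z], [Zᵀ, W]] ⪰ 0`,
`V_ii ≤ t` for all `i`, and `W_jj ≤ t` for all `j`. -/
theorem maxNorm_le_iff_sdp
    {m n : ℕ} (Z : Matrix (Fin m) (Fin n) ℝ) (hZ : Z ≠ 0) (t : ℝ) :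
    maxNorm Z ≤ t ↔
      ∃ V : Matrix (Fin m) (Fin m) ℝ, ∃ W : Matrix (Fin n) (Fin n) ℝ,
        V.IsSymm ∧ W.IsSymm ∧
        (Matrix.fromBlocks V Z Z.transpose W).PosSemidef ∧
        (∀ i, V i i ≤ t) ∧ (∀ j, W j j ≤ t) := by
  have hm : 0 < m := by
    rcases Nat.eq_zero_or_pos m with h | h
    · exfalso
      apply hZ
      subst h
      ext i j
      exact i.elim0
    · exact h
  have hn : 0 < n := by
    rcases Nat.eq_zero_or_pos n with h | h
    · exfalso
      apply hZ
      subst h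
      ext i j
      exact j.elim0
    · exact h
  constructor
  · intro ht
    apply feas_closed Z t
    intro ε hε
    have hne : {r : ℝ | ∃ k : ℕ, ∃ L : Matrix (Fin m) (Fin k) ℝ, ∃ R : Matrix (Fin n) (Fin k) ℝ,
        L * R.transpose = Z ∧
        r = max (⨆ i, ∑ j, (L i j) ^ 2) (⨆ i, ∑ j, (R i j) ^ 2)}.Nonempty := by
      refine ⟨_, n, Z, (1 : Matrix (Fin n) (Fin n) ℝ), ?_, rfl⟩
      rw [Matrix.transpose_one, Matrix.mul_one]
    have hlt : maxNorm Z < t + ε := lt_of_le_of_lt ht (lt_add_of_pos_right t hε)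
    obtain ⟨r, hrS, hrlt⟩ := exists_lt_of_csInf_lt hne hlt
    obtain ⟨V, W, h1, h2, h3, h4, h5⟩ := feas_of_mem Z hrS
    exact ⟨V, W, h1, h2, h3, fun i => (h4 i).trans hrlt.le, fun j => (h5 j).trans hrlt.le⟩
  · rintro ⟨V, W, -, -, h3, h4, h5⟩
    exact maxNorm_le_of_feas hm hn Z V W h3 h4 h5
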